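/- Define y⁽⁰⁾ = y and y⁽ᵗ⁾ = K(K+λI)⁻¹(α y + (1−α)y⁽ᵗ⁻¹⁾). For α ∈ [0,1], y⁽ᵗ⁾ converges as τ → ∞ to y⁽∞⁾ = α K(αK + λI)⁻¹ y. -/

import Mathlib

open Filter

section Aux

variable {n : ℕ}

private lemma sd_conj_mul (U V A B : Matrix (Fin n) (Fin n) ℝ) (h : V * U = 1) :
    (U * A * V) * (U * B * V) = U * (A * B) * V := by
  have h2 : U * A * V * (U * B * V) = U * A * (V * U) * B * V := by
    simp only [Matrix.mul_assoc]
  rw [h2, h, Matrix.mul_one]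
  simp only [Matrix.mul_assoc]

private lemma sd_conj_pow (U V A : Matrix (Fin n) (Fin n) ℝ) (hUV : U * V = 1)
    (hVU : V * U = 1) (t : ℕ) : (U * A * V) ^ t = U * A ^ t * V := by
  induction t with
  | zero => rw [pow_zero, pow_zero, Matrix.mul_one, hUV]
  | succ t ih =>
      rw [pow_succ, pow_succ, ih, sd_conj_mul _ _ _ _ hVU]

private lemma sd_diag_smul (c : ℝ) (d : Fin n → ℝ) :
    c • Matrix.diagonal d = Matrix.diagonal (fun i => c * d i) := by
  ext i j
  by_cases h : i = j <;> simp [Matrix.diagonal, h]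

private lemma sd_conj_congr (U V : Matrix (Fin n) (Fin n) ℝ) {f g : Fin n → ℝ}
    (h : ∀ i, f i = g i) : U * Matrix.diagonal f * V = U * Matrix.diagonal g * V := by
  rw [Matrix.diagonal_eq_diagonal_iff.mpr h]

private lemma sd_conj_inv (U V : Matrix (Fin n) (Fin n) ℝ) (d : Fin n → ℝ)
    (hUV : U * V = 1) (hVU : V * U = 1) (hd : ∀ i, d i ≠ 0) :
    (U * Matrix.diagonal d * V)⁻¹ = U * Matrix.diagonal (fun i => (d i)⁻¹) * V := by
  apply Matrix.inv_eq_right_inv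
  rw [sd_conj_mul _ _ _ _ hVU, Matrix.diagonal_mul_diagonal]
  have h1 : (fun i => d i * (d i)⁻¹) = fun _ => (1 : ℝ) := by
    funext i; exact mul_inv_cancel₀ (hd i)
  rw [h1, Matrix.diagonal_one, Matrix.mul_one, hUV]

end Aux

/-- The self-distillation iterates converge to `α K(αK + λI)⁻¹ y`. -/
theorem self_distillation_limit (n : ℕ) (K : Matrix (Fin n) (Fin n) ℝ)
    (hK : K.PosSemidef) (lam : ℝ) (hlam : 0 < lam) (α : ℝ)
    (hα : α ∈ Set.Icc (0:ℝ) 1) (y : Fin n → ℝ) (yseq : ℕ → (Fin n → ℝ))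
    (h0 : yseq 0 = y)
    (hrec : ∀ t : ℕ, yseq (t + 1)
      = (K * (K + lam • (1 : Matrix (Fin n) (Fin n) ℝ))⁻¹).mulVec
          (α • y + (1 - α) • yseq t)) :
    Tendsto yseq atTop
      (nhds ((α • (K * (α • K + lam • (1 : Matrix (Fin n) (Fin n) ℝ))⁻¹)).mulVec y)) := by
  obtain ⟨hα0, hα1⟩ := hα
  have hHerm : K.IsHermitian := hK.1
  set U : Matrix (Fin n) (Fin n) ℝ := (hHerm.eigenvectorUnitary : Matrix (Fin n) (Fin n) ℝ)
    with hUdef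
  set μ : Fin n → ℝ := hHerm.eigenvalues with hμdef
  have hμ0 : ∀ i, 0 ≤ μ i := fun i => hK.eigenvalues_nonneg i
  have hUV : U * star U = 1 := Unitary.coe_mul_star_self _
  have hVU : star U * U = 1 := Unitary.coe_star_mul_self _
  have hspec : K = U * Matrix.diagonal μ * star U := by
    have h := hHerm.spectral_theorem
    simp only [RCLike.ofReal_real_eq_id, Function.id_comp] at h
    exact h
  have hone : (1 : Matrix (Fin n) (Fin n) ℝ)
      = U * Matrix.diagonal (fun _ => (1:ℝ)) * star U := by
    rw [Matrix.diagonal_one, Matrix.mul_one, hUV]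
  have hconj_smul : ∀ (c : ℝ) (d : Fin n → ℝ),
      c • (U * Matrix.diagonal d * star U)
        = U * Matrix.diagonal (fun i => c * d i) * star U := by
    intro c d
    rw [← sd_diag_smul, Matrix.mul_smul, Matrix.smul_mul]
  have hconj_add : ∀ (d e : Fin n → ℝ),
      (U * Matrix.diagonal d * star U) + (U * Matrix.diagonal e * star U)
        = U * Matrix.diagonal (fun i => d i + e i) * star U := by
    intro d e
    rw [← Matrix.add_mul, ← Matrix.mul_add, ← Matrix.diagonal_add]
  have hμlam : ∀ i, μ i + lam ≠ 0 := fun i => by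
    have := hμ0 i; intro h; linarith
  have hαμlam : ∀ i, α * μ i + lam ≠ 0 := fun i => by
    have := mul_nonneg hα0 (hμ0 i); intro h; linarith
  have hM : K + lam • (1 : Matrix (Fin n) (Fin n) ℝ)
      = U * Matrix.diagonal (fun i => μ i + lam) * star U := by
    conv_lhs => rw [hspec, hone]
    rw [hconj_smul, hconj_add]
    exact sd_conj_congr _ _ fun i => by ring
  have hN : α • K + lam • (1 : Matrix (Fin n) (Fin n) ℝ)
      = U * Matrix.diagonal (fun i => α * μ i + lam) * star U := by
    conv_lhs => rw [hspec, hone]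
    rw [hconj_smul, hconj_smul, hconj_add]
    exact sd_conj_congr _ _ fun i => by ring
  have hMinv : (K + lam • (1 : Matrix (Fin n) (Fin n) ℝ))⁻¹
      = U * Matrix.diagonal (fun i => (μ i + lam)⁻¹) * star U := by
    rw [hM, sd_conj_inv _ _ _ hUV hVU hμlam]
  have hNinv : (α • K + lam • (1 : Matrix (Fin n) (Fin n) ℝ))⁻¹
      = U * Matrix.diagonal (fun i => (α * μ i + lam)⁻¹) * star U := by
    rw [hN, sd_conj_inv _ _ _ hUV hVU hαμlam]
  set A : Matrix (Fin n) (Fin n) ℝ := K * (K + lam • (1 : Matrix (Fin n) (Fin n) ℝ))⁻¹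
    with hAdef
  have hA : A = U * Matrix.diagonal (fun i => μ i * (μ i + lam)⁻¹) * star U := by
    rw [hAdef, hMinv, hspec, sd_conj_mul _ _ _ _ hVU, Matrix.diagonal_mul_diagonal]
  set W : Matrix (Fin n) (Fin n) ℝ := K * (α • K + lam • (1 : Matrix (Fin n) (Fin n) ℝ))⁻¹
    with hWdef
  have hW : W = U * Matrix.diagonal (fun i => μ i * (α * μ i + lam)⁻¹) * star U := by
    rw [hWdef, hNinv, hspec, sd_conj_mul _ _ _ _ hVU, Matrix.diagonal_mul_diagonal]
  set yinf : Fin n → ℝ := (α • W).mulVec y with hyinf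
  -- the key algebraic identity
  have hkey : α • A + ((1 - α) * α) • (A * W) = α • W := by
    rw [hA, hW, sd_conj_mul _ _ _ _ hVU, Matrix.diagonal_mul_diagonal,
      hconj_smul, hconj_smul, hconj_smul, hconj_add]
    refine sd_conj_congr _ _ fun i => ?_
    have h1 := hμlam i
    have h2 := hαμlam i
    field_simp
    ring
  -- fixed point property
  have hfix : A.mulVec (α • y + (1 - α) • yinf) = yinf := by
    rw [hyinf, Matrix.mulVec_add, Matrix.mulVec_smul, Matrix.mulVec_smul,
      Matrix.mulVec_mulVec, Matrix.mul_smul]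
    have h3 : α • A.mulVec y + (1 - α) • (α • (A * W)).mulVec y
        = (α • A + ((1 - α) * α) • (A * W)).mulVec y := by
      rw [Matrix.add_mulVec, Matrix.smul_mulVec, Matrix.smul_mulVec,
        Matrix.smul_mulVec, smul_smul]
    rw [h3, hkey]
  set B : Matrix (Fin n) (Fin n) ℝ := (1 - α) • A with hBdef
  have herr : ∀ t, yseq t = yinf + (B ^ t).mulVec (y - yinf) := by
    intro t
    induction t with
    | zero =>
        rw [h0, pow_zero, Matrix.one_mulVec]
        abel
    | succ t ih =>
        rw [hrec t, ih]
        have expand : α • y + (1 - α) • (yinf + (B ^ t).mulVec (y - yinf))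
            = (α • y + (1 - α) • yinf) + (1 - α) • (B ^ t).mulVec (y - yinf) := by
          rw [smul_add]; abel
        rw [expand, Matrix.mulVec_add, hfix]
        congr 1
        have h1 : (B ^ (t + 1)).mulVec (y - yinf)
            = B.mulVec ((B ^ t).mulVec (y - yinf)) := by
          rw [pow_succ', ← Matrix.mulVec_mulVec]
        rw [h1, Matrix.mulVec_smul]
        set x := (B ^ t).mulVec (y - yinf) with hxdef
        rw [hBdef, Matrix.smul_mulVec]
  -- convergence of B^t to 0
  set c : Fin n → ℝ := fun i => (1 - α) * (μ i * (μ i + lam)⁻¹) with hcdef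
  have hB : B = U * Matrix.diagonal c * star U := by
    rw [hBdef, hA, hconj_smul]
  have hc : ∀ i, |c i| < 1 := by
    intro i
    have hpos : (0:ℝ) < μ i + lam := by linarith [hμ0 i]
    have h1 : 0 ≤ μ i * (μ i + lam)⁻¹ := mul_nonneg (hμ0 i) (inv_nonneg.mpr hpos.le)
    have h2 : μ i * (μ i + lam)⁻¹ < 1 := by
      rw [← div_eq_mul_inv]
      exact (div_lt_one hpos).mpr (by linarith)
    have h3 : 0 ≤ c i := mul_nonneg (by linarith) h1
    rw [abs_of_nonneg h3]
    calc c i = (1 - α) * (μ i * (μ i + lam)⁻¹) := rfl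
      _ ≤ 1 * (μ i * (μ i + lam)⁻¹) := mul_le_mul_of_nonneg_right (by linarith) h1
      _ = μ i * (μ i + lam)⁻¹ := one_mul _
      _ < 1 := h2
  have hBpow : ∀ t, B ^ t = U * Matrix.diagonal (fun i => c i ^ t) * star U := by
    intro t
    rw [hB, sd_conj_pow _ _ _ hUV hVU, Matrix.diagonal_pow]
    rfl
  have hdiag : Tendsto (fun t => Matrix.diagonal (fun i => c i ^ t)) atTop
      (nhds (0 : Matrix (Fin n) (Fin n) ℝ)) := by
    rw [show (0 : Matrix (Fin n) (Fin n) ℝ) = Matrix.diagonal (fun _ => (0:ℝ)) by simp]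
    have hcont : Continuous fun d : Fin n → ℝ => Matrix.diagonal d :=
      continuous_id.matrix_diagonal
    refine (hcont.tendsto _).comp ?_
    rw [tendsto_pi_nhds]
    intro i
    exact tendsto_pow_atTop_nhds_zero_of_abs_lt_one (hc i)
  have hBlim : Tendsto (fun t => B ^ t) atTop (nhds (0 : Matrix (Fin n) (Fin n) ℝ)) := by
    have h4 : Tendsto (fun t => U * Matrix.diagonal (fun i => c i ^ t) * star U) atTop
        (nhds (U * (0 : Matrix (Fin n) (Fin n) ℝ) * star U)) :=
      (tendsto_const_nhds.mul hdiag).mul tendsto_const_nhds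
    simp only [Matrix.mul_zero, Matrix.zero_mul] at h4
    simpa only [hBpow] using h4
  have hmv : Continuous fun M : Matrix (Fin n) (Fin n) ℝ => M.mulVec (y - yinf) :=
    continuous_id.matrix_mulVec continuous_const
  have hlim2 : Tendsto (fun t => (B ^ t).mulVec (y - yinf)) atTop (nhds 0) := by
    have h5 := (hmv.tendsto (0 : Matrix (Fin n) (Fin n) ℝ)).comp hBlim
    simpa [Matrix.zero_mulVec, Function.comp_def] using h5
  have final : Tendsto yseq atTop (nhds yinf) := by
    have h6 : Tendsto (fun t => yinf + (B ^ t).mulVec (y - yinf)) atTop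
        (nhds (yinf + 0)) := tendsto_const_nhds.add hlim2
    rw [add_zero] at h6
    convert h6 using 1
    funext t
    exact herr t
  exact final
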